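/- For every d, r ∈ ℕ with r ≥ 1 and all Borel sets A_1, …, A_r ⊆ [0,1]^d, the r-fold BKR combination □_{i=1}^r A_i is Lebesgue measurable. -/

import Mathlib

open MeasureTheory unitInterval

/-- `cyl A K` is the maximal cylinder subset of `A` that is free in the coordinates
outside `K`: the set of `ω` such that every `ω'` agreeing with `ω` on `K` lies in `A`. -/
def cyl {ι S : Type*} (A : Set (ι → S)) (K : Set ι) : Set (ι → S) :=
  {ω | ∀ ω' : ι → S, (∀ i ∈ K, ω' i = ω i) → ω' ∈ A}

/-- The BKR combination `A □ B := ⋃_{K ⊆ [d]} ([A]_K ∩ [B]_{Kᶜ})`. -/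
def bkr {ι S : Type*} (A B : Set (ι → S)) : Set (ι → S) :=
  ⋃ K : Set ι, cyl A K ∩ cyl B Kᶜ

/-- The simultaneous `r`-fold BKR combination: union over pairwise disjoint
`J_1, …, J_r` of `⋂ i, [A i]_{J i}`. -/
def bkrMulti {ι S : Type*} (r : ℕ) (A : Fin r → Set (ι → S)) : Set (ι → S) :=
  ⋃ (J : Fin r → Set ι) (_ : Pairwise (Function.onFun Disjoint J)), ⋂ i, cyl (A i) (J i)

open Filter Topology Set NNReal ENNReal in
/-- Capacitability-type argument: the range of a continuous map from Baire space into a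
metric space is null-measurable for any finite Borel measure. -/
lemma range_baire_nullMeasurable {Y : Type*} [MetricSpace Y] [MeasurableSpace Y] [BorelSpace Y]
    (μ : Measure Y) [IsFiniteMeasure μ] (h : (ℕ → ℕ) → Y) (hh : Continuous h) :
    NullMeasurableSet (Set.range h) μ := by
  classical
  set E := Set.range h with hE
  have key : ∀ c, c < μ E → ∃ K : Set Y, MeasurableSet K ∧ K ⊆ E ∧ c ≤ μ K := by
    intro c hc
    have step : ∀ (s : Set (ℕ → ℕ)) (k : ℕ), c < μ (h '' s) →
        ∃ m : ℕ, c < μ (h '' (s ∩ {x | x k ≤ m})) := by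
      intro s k hs
      have hmono : Monotone (fun m : ℕ => h '' (s ∩ {x | x k ≤ m})) := fun a b hab =>
        Set.image_mono (Set.inter_subset_inter_right _ fun x hx => le_trans hx hab)
      have hcov0 : (⋃ m : ℕ, (s ∩ {x | x k ≤ m})) = s := by
        ext x
        simp only [Set.mem_iUnion, Set.mem_inter_iff, Set.mem_setOf_eq]
        exact ⟨fun ⟨m, hm, _⟩ => hm, fun hx => ⟨x k, hx, le_refl _⟩⟩
      have hcover : (⋃ m : ℕ, h '' (s ∩ {x | x k ≤ m})) = h '' s := by
        rw [← Set.image_iUnion, hcov0]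
      have hsup := hmono.measure_iUnion (μ := μ)
      rw [hcover] at hsup
      rw [hsup] at hs
      exact lt_iSup_iff.mp hs
    let next : ℕ → Set (ℕ → ℕ) → ℕ := fun k s =>
      if hc' : c < μ (h '' s) then (step s k hc').choose else 0
    let T : ℕ → Set (ℕ → ℕ) := fun k =>
      Nat.rec Set.univ (fun k Tk => Tk ∩ {x | x k ≤ next k Tk}) k
    have hT0 : T 0 = Set.univ := rfl
    have hTsucc : ∀ k, T (k + 1) = T k ∩ {x | x k ≤ next k (T k)} := fun _ => rfl
    have hTmeas : ∀ k, c < μ (h '' T k) := by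
      intro k
      induction k with
      | zero => rwa [hT0, Set.image_univ]
      | succ k ih =>
        rw [hTsucc]
        have hnx : next k (T k) = (step (T k) k ih).choose := dif_pos ih
        rw [hnx]
        exact (step (T k) k ih).choose_spec
    set n : ℕ → ℕ := fun k => next k (T k) with hn
    have hbound : ∀ k x, x ∈ T k → ∀ j < k, x j ≤ n j := by
      intro k
      induction k with
      | zero => intro x _ j hj; omega
      | succ k ih =>
        intro x hx j hj
        rw [hTsucc] at hx
        rcases Nat.lt_succ_iff_lt_or_eq.mp hj with hj' | rfl
        · exact ih x hx.1 j hj'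
        · exact hx.2
    let C : ℕ → Set Y := fun k => closure (h '' T k)
    have hTanti : Antitone T := antitone_nat_of_succ_le fun k => by
      rw [hTsucc]; exact Set.inter_subset_left
    have hCanti : Antitone C := fun a b hab => closure_mono (Set.image_mono (hTanti hab))
    have hCge : ∀ k, c ≤ μ (C k) :=
      fun k => le_trans (hTmeas k).le (measure_mono subset_closure)
    refine ⟨⋂ k, C k, MeasurableSet.iInter fun k => isClosed_closure.measurableSet, ?_, ?_⟩
    · -- the compact-like core is contained in `E`
      intro y hy
      have hz : ∀ k : ℕ, ∃ z ∈ T k, dist y (h z) < 1 / (k + 1) := by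
        intro k
        have hy' : y ∈ closure (h '' T k) := Set.mem_iInter.mp hy k
        rcases Metric.mem_closure_iff.mp hy' (1 / (k + 1)) (by positivity) with ⟨w, hw, hdist⟩
        rcases hw with ⟨z, hzT, rfl⟩
        exact ⟨z, hzT, hdist⟩
      choose z hzT hzd using hz
      have hhz : Tendsto (fun k => h (z k)) atTop (𝓝 y) := by
        rw [tendsto_iff_dist_tendsto_zero]
        refine squeeze_zero (fun k => dist_nonneg)
          (fun k => ?_) tendsto_one_div_add_atTop_nhds_zero_nat
        rw [dist_comm]
        exact (hzd k).le
      let B : Set (ℕ → ℕ) := Set.univ.pi fun j => Set.Iic (n j)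
      have hB : IsCompact B := isCompact_univ_pi fun j => (Set.finite_Iic (n j)).isCompact
      let w : ℕ → (ℕ → ℕ) := fun k j => min (z k j) (n j)
      have hwB : ∀ k, w k ∈ B := fun k => Set.mem_univ_pi.mpr fun j => Set.mem_Iic.mpr (min_le_right _ _)
      obtain ⟨a, -, φ, hφ, hwa⟩ := hB.tendsto_subseq hwB
      have hza : Tendsto (fun k => z (φ k)) atTop (𝓝 a) := by
        rw [tendsto_pi_nhds]
        intro j
        have hj := (tendsto_pi_nhds.mp hwa) j
        refine hj.congr' ?_
        filter_upwards [eventually_gt_atTop j] with k hk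
        have hφk : j < φ k := lt_of_lt_of_le hk hφ.le_apply
        have hzb := hbound (φ k) _ (hzT (φ k)) j hφk
        simp [w, Function.comp, min_eq_left hzb]
      have h1 : Tendsto (fun k => h (z (φ k))) atTop (𝓝 (h a)) :=
        (hh.tendsto a).comp hza
      have h2 : Tendsto (fun k => h (z (φ k))) atTop (𝓝 y) :=
        hhz.comp hφ.tendsto_atTop
      exact ⟨a, tendsto_nhds_unique h1 h2⟩
    · rw [hCanti.measure_iInter
        (fun k => isClosed_closure.measurableSet.nullMeasurableSet)
        ⟨0, measure_ne_top μ _⟩]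
      exact le_iInf hCge
  -- assemble null-measurability from inner approximation
  by_cases h0 : μ E = 0
  · exact .of_null h0
  · have hfin := measure_ne_top μ E
    have hc : ∀ k : ℕ, μ E - (k : ℝ≥0∞)⁻¹ < μ E := by
      intro k
      refine ENNReal.sub_lt_self hfin h0 ?_
      simp [ENNReal.inv_ne_zero]
    choose K hKmeas hKE hKc using fun k : ℕ => key _ (hc k)
    set G := ⋃ k, K k with hG
    have hGmeas : MeasurableSet G := MeasurableSet.iUnion hKmeas
    have hGE : G ⊆ E := Set.iUnion_subset hKE
    have hle : μ E ≤ μ G := by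
      refine ENNReal.le_of_forall_pos_le_add fun ε hε _ => ?_
      obtain ⟨k, hk⟩ := ENNReal.exists_inv_nat_lt (by exact_mod_cast hε.ne' :
        (ε : ℝ≥0∞) ≠ 0)
      have h1 : μ E - (k : ℝ≥0∞)⁻¹ ≤ μ G :=
        le_trans (hKc k) (measure_mono (Set.subset_iUnion K k))
      have h2 : μ E ≤ μ G + (k : ℝ≥0∞)⁻¹ := tsub_le_iff_right.mp h1
      exact h2.trans (add_le_add le_rfl hk.le)
    have hnull : μ (E \ G) = 0 := by
      refine measure_mono_null (Set.diff_subset_diff_left (subset_toMeasurable μ E)) ?_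
      rw [measure_diff (hGE.trans (subset_toMeasurable μ E)) hGmeas.nullMeasurableSet
        (measure_ne_top μ G), measure_toMeasurable]
      exact tsub_eq_zero_of_le hle
    have hEeq : E = G ∪ (E \ G) := (Set.union_diff_cancel hGE).symm
    rw [hEeq]
    exact hGmeas.nullMeasurableSet.union (.of_null hnull)

/-- Analytic sets in a metric space are null-measurable for finite Borel measures. -/
lemma analyticSet_nullMeasurable {Y : Type*} [MetricSpace Y] [MeasurableSpace Y]
    [BorelSpace Y] (μ : Measure Y) [IsFiniteMeasure μ] {s : Set Y}
    (hs : MeasureTheory.AnalyticSet s) : NullMeasurableSet s μ := by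
  rw [MeasureTheory.AnalyticSet_def] at hs
  rcases hs with rfl | ⟨f, hf, rfl⟩
  · exact MeasurableSet.empty.nullMeasurableSet
  · exact range_baire_nullMeasurable μ f hf

/-- Each cylinder `[A]_K` of a Borel set `A ⊆ [0,1]^d` is Lebesgue (null-)measurable. -/
lemma cyl_nullMeasurable {d : ℕ} {A : Set (Fin d → I)} (hA : MeasurableSet A)
    (K : Set (Fin d)) :
    NullMeasurableSet (cyl A K) (volume : Measure (Fin d → I)) := by
  classical
  set F : (Fin d → I) × (Fin d → I) → (Fin d → I) :=
    fun p => fun i => if i ∈ K then p.1 i else p.2 i with hF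
  have hFc : Continuous F := by
    refine continuous_pi fun i => ?_
    by_cases hi : i ∈ K
    · simpa [hF, hi, Function.comp_def] using (continuous_apply i).comp continuous_fst
    · simpa [hF, hi, Function.comp_def] using (continuous_apply i).comp continuous_snd
  have hcompl : (cyl A K)ᶜ = F '' (Aᶜ ×ˢ Set.univ) := by
    ext ω
    simp only [Set.mem_compl_iff, cyl, Set.mem_setOf_eq, not_forall, Set.mem_image,
      Set.mem_prod, Set.mem_univ, and_true]
    constructor
    · rintro ⟨ω', hagree, hnA⟩
      refine ⟨(ω', ω), hnA, ?_⟩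
      funext i
      by_cases hi : i ∈ K
      · simp only [hF, hi, if_pos]
        exact hagree i hi
      · simp [hF, hi]
    · rintro ⟨⟨ω', τ⟩, hnA, rfl⟩
      exact ⟨ω', ⟨fun i hi => by simp [hF, hi], hnA⟩⟩
  have han : MeasureTheory.AnalyticSet ((cyl A K)ᶜ) := by
    rw [hcompl]
    exact (MeasurableSet.analyticSet (hA.compl.prod MeasurableSet.univ)).image_of_continuous hFc
  have hnm := analyticSet_nullMeasurable (volume : Measure (Fin d → I)) han
  simpa using hnm.compl

/-- For all Borel sets `A_1, ..., A_r` in `[0,1]^d` (with `r ≥ 1`), the `r`-fold BKR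
combination is Lebesgue measurable. -/
theorem bkrMulti_nullMeasurable (d r : ℕ) (hr : 1 ≤ r) (A : Fin r → Set (Fin d → I))
    (hA : ∀ i, MeasurableSet (A i)) :
    NullMeasurableSet (bkrMulti r A) (volume : Measure (Fin d → I)) := by
  unfold bkrMulti
  refine NullMeasurableSet.iUnion fun J => NullMeasurableSet.iUnion fun _ => ?_
  exact NullMeasurableSet.iInter fun i => cyl_nullMeasurable (hA i) (J i)
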